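/- Let q be a prime power with 10 dividing q − 1, and let c ∈ F_q^*. Then the number N of pairs (a, y) ∈ F_q × F_q with a^2 + c y^{10} = 1 and y ≠ 0 satisfies N ≥ q − 8√q − 3. In particular, if q ≥ 72 then there exists a pair (a, y) ∈ F_q × F_q with y ≠ 0 and a^2 + c y^{10} = 1. -/

import Mathlib

open Finset Polynomial

private lemma norm_mulChar_apply_unit {F : Type*} [Field F] [Fintype F] (χ : MulChar F ℂ)
    {x : F} (hx : x ≠ 0) : ‖χ x‖ = 1 := by
  have hcard : Fintype.card F - 1 ≠ 0 := by
    have := Fintype.one_lt_card (α := F); omega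
  have h1 : χ x ^ (Fintype.card F - 1) = 1 := by
    rw [← map_pow, FiniteField.pow_card_sub_one_eq_one x hx, map_one]
  exact Complex.norm_eq_one_of_pow_eq_one h1 hcard

private lemma mulChar_conj {F : Type*} [Field F] [Fintype F] (χ : MulChar F ℂ) (x : F) :
    (starRingEnd ℂ) (χ x) = χ⁻¹ x := by
  rcases eq_or_ne x 0 with rfl | hx
  · rw [MulChar.map_nonunit χ not_isUnit_zero, MulChar.map_nonunit _ not_isUnit_zero, map_zero]
  · rw [MulChar.inv_apply_eq_inv']
    have hns : Complex.normSq (χ x) = 1 := by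
      rw [Complex.normSq_eq_norm_sq, norm_mulChar_apply_unit χ hx, one_pow]
    have : χ x * (starRingEnd ℂ) (χ x) = 1 := by
      rw [Complex.mul_conj, hns, Complex.ofReal_one]
    exact (eq_inv_of_mul_eq_one_left (by rwa [mul_comm] at this)).symm ▸ rfl

private lemma conj_jacobiSum {F : Type*} [Field F] [Fintype F] (χ φ : MulChar F ℂ) :
    (starRingEnd ℂ) (jacobiSum χ φ) = jacobiSum χ⁻¹ φ⁻¹ := by
  simp only [jacobiSum, map_sum, map_mul, mulChar_conj]

private lemma norm_jacobiSum {F : Type*} [Field F] [Fintype F] {χ φ : MulChar F ℂ}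
    (hχ : χ ≠ 1) (hφ : φ ≠ 1) (hχφ : χ * φ ≠ 1) :
    ‖jacobiSum χ φ‖ = Real.sqrt (Fintype.card F) := by
  have hr : ringChar ℂ ≠ ringChar F := by
    rw [ringChar.eq_zero]
    exact (CharP.ringChar_ne_zero_of_finite F).symm
  have h := jacobiSum_mul_jacobiSum_inv hr hχ hφ hχφ
  have h2 : ‖jacobiSum χ φ‖ ^ 2 = (Fintype.card F : ℝ) := by
    have hn := congrArg norm h
    rw [norm_mul, ← conj_jacobiSum, RCLike.norm_conj] at hn
    rw [sq, hn]
    simp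
  rw [← Real.sqrt_sq (norm_nonneg _), h2]

/-- Existence of a "generator" multiplicative character with associated counting formulas. -/
private lemma exists_mulChar (F : Type*) [Field F] [Fintype F] :
    ∃ χ₀ : MulChar F ℂ, (∀ k, χ₀ ^ k = 1 ↔ (Fintype.card F - 1) ∣ k) ∧
      ∀ d : ℕ, 0 < d → d ∣ Fintype.card F - 1 → ∀ u : F,
        (Nat.card {y : F // y ^ d = u} : ℂ)
          = ∑ j ∈ Finset.range d, (χ₀ ^ ((Fintype.card F - 1) / d)) u ^ j := by
  classical
  have hn : 0 < Fintype.card F - 1 := by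
    have := Fintype.one_lt_card (α := F); omega
  set n := Fintype.card F - 1 with hndef
  have hcardu : Nat.card Fˣ = n := by
    rw [Nat.card_units, Nat.card_eq_fintype_card]
  obtain ⟨g, hg⟩ := IsCyclic.exists_generator (α := Fˣ)
  have hgord : orderOf g = n := by
    rw [← hcardu]; exact orderOf_eq_card_of_forall_mem_zpowers hg
  haveI : HasEnoughRootsOfUnity ℂ (Monoid.exponent Fˣ) := inferInstance
  obtain ⟨e⟩ := MulChar.mulEquiv_units F ℂ
  haveI : Finite (MulChar F ℂ) := Finite.of_equiv _ e.symm.toEquiv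
  haveI : Fintype (MulChar F ℂ) := Fintype.ofFinite _
  haveI : IsCyclic (MulChar F ℂ) := isCyclic_of_surjective e.symm.toMonoidHom e.symm.surjective
  have hcard : Nat.card (MulChar F ℂ) = n := by
    rw [← hcardu]; exact Nat.card_congr e.toEquiv
  obtain ⟨χ₀, hχ₀⟩ := IsCyclic.exists_generator (α := MulChar F ℂ)
  have hord : orderOf χ₀ = n := by
    rw [← hcard]; exact orderOf_eq_card_of_forall_mem_zpowers hχ₀
  have hpow : ∀ k, χ₀ ^ k = 1 ↔ n ∣ k := by
    intro k
    rw [← hord, ← orderOf_dvd_iff_pow_eq_one]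
  -- injectivity of χ₀ on units
  have hinj : ∀ x : F, x ≠ 0 → χ₀ x = 1 → x = 1 := by
    intro x hx h1
    by_contra hne
    obtain ⟨χ, hχ⟩ := MulChar.exists_apply_ne_one_of_hasEnoughRootsOfUnity F ℂ hne
    obtain ⟨k, hk⟩ := mem_powers_iff_mem_zpowers.mpr (hχ₀ χ)
    apply hχ
    have hux : IsUnit x := hx.isUnit
    rw [← hk, ← hux.unit_spec, MulChar.pow_apply_coe, hux.unit_spec, h1, one_pow]
  -- primitive roots of unity in F
  have hprim : ∀ d : ℕ, 0 < d → d ∣ n → ∃ ζ : F, IsPrimitiveRoot ζ d := by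
    intro d hd hdn
    refine ⟨((g ^ (n / d) : Fˣ) : F), IsPrimitiveRoot.coe_units_iff.mpr ?_⟩
    have hod : orderOf (g ^ (n / d)) = d := by
      rw [orderOf_pow, hgord, Nat.gcd_eq_right (Nat.div_dvd_of_dvd hdn),
        Nat.div_div_self hdn hn.ne']
    have hpr := IsPrimitiveRoot.orderOf (g ^ (n / d))
    rwa [hod] at hpr
  -- exact count of d-th roots
  have hcount : ∀ d : ℕ, 0 < d → d ∣ n → ∀ u : F, u ≠ 0 → (∃ y : F, y ^ d = u) →
      Nat.card {y : F // y ^ d = u} = d := by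
    intro d hd hdn u hu hex
    obtain ⟨ζ, hζ⟩ := hprim d hd hdn
    have hnodup := hζ.nthRoots_nodup hu
    rw [Nat.card_eq_fintype_card, Fintype.card_subtype]
    have hfil : Finset.univ.filter (fun y : F => y ^ d = u) = (Polynomial.nthRoots d u).toFinset := by
      ext y
      simp [Polynomial.mem_nthRoots hd]
    rw [hfil, Multiset.toFinset_card_of_nodup hnodup, hζ.card_nthRoots, if_pos hex]
  refine ⟨χ₀, hpow, ?_⟩
  intro d hd hdn u
  have hnd0 : n / d ≠ 0 := (Nat.div_pos (Nat.le_of_dvd hn hdn) hd).ne'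
  by_cases hu : u = 0
  · subst hu
    have h1 : Nat.card {y : F // y ^ d = (0 : F)} = 1 := by
      rw [Nat.card_eq_fintype_card, Fintype.card_subtype]
      rw [show Finset.univ.filter (fun y : F => y ^ d = (0 : F)) = {0} by
        ext y; simp [pow_eq_zero_iff hd.ne']]
      simp
    have h0 : (χ₀ ^ (n / d)) (0 : F) = 0 := MulChar.map_nonunit _ not_isUnit_zero
    rw [h1, h0, Finset.sum_eq_single 0 (fun b _ hb => zero_pow hb)
      (fun h => absurd (Finset.mem_range.mpr hd) h)]
    simp
  · have hzd : (χ₀ ^ (n / d)) u ^ d = 1 := by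
      have hun : u ^ n = 1 := by
        have := FiniteField.pow_card_sub_one_eq_one u hu
        rwa [← hndef] at this
      rw [MulChar.pow_apply' _ hnd0, ← pow_mul, Nat.div_mul_cancel hdn, ← map_pow, hun, map_one]
    by_cases hex : ∃ y : F, y ^ d = u
    · have hz1 : (χ₀ ^ (n / d)) u = 1 := by
        obtain ⟨y, rfl⟩ := hex
        have hy : y ≠ 0 := by
          rintro rfl; exact hu (zero_pow hd.ne')
        have hyn : y ^ n = 1 := by
          have := FiniteField.pow_card_sub_one_eq_one y hy
          rwa [← hndef] at this
        rw [MulChar.pow_apply' _ hnd0, map_pow, ← pow_mul, mul_comm d, Nat.div_mul_cancel hdn,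
          ← map_pow, hyn, map_one]
      rw [hcount d hd hdn u hu hex, hz1]
      simp
    · have hcard0 : Nat.card {y : F // y ^ d = u} = 0 := by
        rw [Nat.card_eq_fintype_card, Fintype.card_eq_zero_iff]
        exact ⟨fun yy => hex ⟨yy.1, yy.2⟩⟩
      have hz : (χ₀ ^ (n / d)) u ≠ 1 := by
        intro h1
        apply hex
        have hu1 : u ^ (n / d) = 1 := by
          apply hinj _ (pow_ne_zero _ hu)
          rw [map_pow, ← MulChar.pow_apply' _ hnd0, h1]
        -- write u as power of the generator
        have hux : IsUnit u := isUnit_iff_ne_zero.mpr hu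
        obtain ⟨k, hk⟩ := mem_powers_iff_mem_zpowers.mpr (hg hux.unit)
        have hk1 : (g ^ k) ^ (n / d) = 1 := by
          apply Units.ext
          push_cast [hk, hux.unit_spec]
          exact hu1
        have hdvd2 : n ∣ k * (n / d) := by
          have := orderOf_dvd_of_pow_eq_one (x := g) (n := k * (n / d))
            (by rw [pow_mul]; exact hk1)
          rwa [hgord] at this
        have hdk : d ∣ k := by
          have h2 : d * (n / d) ∣ k * (n / d) := by
            rw [Nat.mul_div_cancel' hdn]
            exact hdvd2
          exact (Nat.mul_dvd_mul_iff_right (Nat.pos_of_ne_zero hnd0)).mp h2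
        obtain ⟨t, rfl⟩ := hdk
        have hk' : g ^ (d * t) = hux.unit := hk
        refine ⟨((g ^ t : Fˣ) : F), ?_⟩
        rw [← Units.val_pow_eq_pow_val, ← pow_mul, mul_comm t, hk', hux.unit_spec]
      rw [hcard0, geom_sum_eq hz, hzd]
      simp

/-- Let `q` be a prime power with `10 ∣ q - 1` and let `c ∈ F_q*`. Then the number `N` of pairs
`(a, y) ∈ F_q × F_q` with `a² + c y¹⁰ = 1` and `y ≠ 0` satisfies `N ≥ q - 8√q - 3`.
In particular, if `q ≥ 72` then such a pair exists. -/
theorem stmt13 {F : Type*} [Field F] [Fintype F] (q : ℕ) (hq : Fintype.card F = q)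
    (hqpp : ∃ (r n : ℕ), r.Prime ∧ 0 < n ∧ q = r ^ n) (hdvd : 10 ∣ q - 1)
    (c : F) (hc : c ≠ 0) :
    (q : ℝ) - 8 * Real.sqrt q - 3 ≤
      (Nat.card {xy : F × F // xy.1 ^ 2 + c * xy.2 ^ 10 = 1 ∧ xy.2 ≠ 0} : ℝ) ∧
    (72 ≤ q → ∃ a y : F, y ≠ 0 ∧ a ^ 2 + c * y ^ 10 = 1) := by
  classical
  obtain ⟨m, hm⟩ := hdvd
  have hq2 : 2 ≤ q := hq ▸ Fintype.one_lt_card (α := F)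
  have hm1 : 1 ≤ m := by
    rcases Nat.eq_zero_or_pos m with h | h
    · omega
    · exact h
  obtain ⟨χ₀, hpow, hL⟩ := exists_mulChar F
  rw [hq] at hpow hL
  set ψ : MulChar F ℂ := χ₀ ^ m with hψdef
  set χ₂ : MulChar F ℂ := χ₀ ^ (5 * m) with hχ₂def
  set N := Nat.card {xy : F × F // xy.1 ^ 2 + c * xy.2 ^ 10 = 1 ∧ xy.2 ≠ 0} with hNdef
  -- character facts
  have htriv : ∀ j : ℕ, ψ ^ j = 1 ↔ 10 ∣ j := by
    intro j
    rw [hψdef, ← pow_mul, hpow, hm, mul_comm m j]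
    exact Nat.mul_dvd_mul_iff_right hm1
  have hψ5 : ψ ^ 5 = χ₂ := by
    rw [hψdef, hχ₂def, ← pow_mul, mul_comm m 5]
  have hχ₂ne : χ₂ ≠ 1 := by
    intro h
    rw [hχ₂def] at h
    have := Nat.le_of_dvd (by omega) ((hpow _).mp h)
    omega
  have hχ₂sq : χ₂ * χ₂ = 1 := by
    rw [hχ₂def, ← pow_add, hpow]
    exact ⟨1, by omega⟩
  have hχ₂inv : χ₂⁻¹ = χ₂ := inv_eq_of_mul_eq_one_right hχ₂sq
  -- counting: reduce to sum over y ≠ 0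
  set t : Finset F := Finset.univ.erase (0 : F) with htdef
  have hmemt : ∀ y : F, y ∈ t ↔ y ≠ 0 := by
    intro y; simp [htdef]
  have hcardt : t.card = q - 1 := by
    rw [htdef, Finset.card_erase_of_mem (Finset.mem_univ 0), Finset.card_univ, hq]
  have e1 : {xy : F × F // xy.1 ^ 2 + c * xy.2 ^ 10 = 1 ∧ xy.2 ≠ 0}
      ≃ Σ y : F, {a : F // a ^ 2 + c * y ^ 10 = 1 ∧ y ≠ 0} :=
    ⟨fun x => ⟨x.1.2, x.1.1, x.2⟩, fun s => ⟨(s.2.1, s.1), s.2.2⟩, fun x => rfl, fun s => rfl⟩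
  have hN1 : N = ∑ y : F, Fintype.card {a : F // a ^ 2 + c * y ^ 10 = 1 ∧ y ≠ 0} := by
    rw [hNdef, Nat.card_eq_fintype_card, Fintype.card_congr e1, Fintype.card_sigma]
  have hL2 : ∀ u : F, (Nat.card {a : F // a ^ 2 = u} : ℂ) = 1 + χ₂ u := by
    intro u
    have h2 := hL 2 (by norm_num) ⟨5 * m, by omega⟩ u
    rw [show (q - 1) / 2 = 5 * m by omega] at h2
    rw [h2, Finset.sum_range_succ, Finset.sum_range_one, pow_zero, pow_one, ← hχ₂def]
  have hNsum : (N : ℂ) = ∑ y ∈ t, (1 + χ₂ (1 - c * y ^ 10)) := by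
    rw [hN1]
    push_cast
    rw [← Finset.sum_subset (Finset.subset_univ t) ?vanish]
    · apply Finset.sum_congr rfl
      intro y hy
      have hy0 : y ≠ 0 := (hmemt y).mp hy
      have hcongr : Fintype.card {a : F // a ^ 2 + c * y ^ 10 = 1 ∧ y ≠ 0}
          = Nat.card {a : F // a ^ 2 = 1 - c * y ^ 10} := by
        rw [Nat.card_eq_fintype_card]
        apply Fintype.card_congr
        apply Equiv.subtypeEquivRight
        intro a
        constructor
        · rintro ⟨h, -⟩; linear_combination h
        · intro h; exact ⟨by linear_combination h, hy0⟩
      rw [hcongr, hL2 (1 - c * y ^ 10)]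
    case vanish =>
      intro y _ hy
      have hy0 : y = 0 := by
        by_contra h
        exact hy ((hmemt y).mpr h)
      subst hy0
      have : Fintype.card {a : F // a ^ 2 + c * 0 ^ 10 = 1 ∧ (0 : F) ≠ 0} = 0 := by
        rw [Fintype.card_eq_zero_iff]
        exact ⟨fun a => a.2.2 rfl⟩
      rw [this, Nat.cast_zero]
  -- the fiberwise rewriting
  have hsub : ∀ j : ℕ, ∑ u : F, (ψ ^ j) u * χ₂ (1 - c * u)
      = (ψ ^ j) c⁻¹ * jacobiSum (ψ ^ j) χ₂ := by
    intro j
    rw [jacobiSum, Finset.mul_sum]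
    rw [← Equiv.sum_comp (Equiv.mulLeft₀ c⁻¹ (inv_ne_zero hc))
      (fun u => (ψ ^ j) u * χ₂ (1 - c * u))]
    apply Finset.sum_congr rfl
    intro w _
    have hcw : c * (c⁻¹ * w) = w := by field_simp
    simp only [Equiv.mulLeft₀_apply, map_mul, hcw]
    ring
  have hT : ∑ y ∈ t, χ₂ (1 - c * y ^ 10)
      = ∑ j ∈ Finset.range 10, (ψ ^ j) c⁻¹ * jacobiSum (ψ ^ j) χ₂ := by
    have hmaps : ∀ y ∈ t, y ^ 10 ∈ t := by
      intro y hy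
      exact (hmemt _).mpr (pow_ne_zero _ ((hmemt y).mp hy))
    have hfib : ∀ u ∈ t, ((t.filter (fun y => y ^ 10 = u)).card : ℂ)
        = Nat.card {y : F // y ^ 10 = u} := by
      intro u hu
      have hu0 : u ≠ 0 := (hmemt u).mp hu
      rw [Nat.card_eq_fintype_card, Fintype.card_subtype]
      have hfe : t.filter (fun y => y ^ 10 = u) = Finset.univ.filter (fun y => y ^ 10 = u) := by
        ext y
        simp only [Finset.mem_filter, hmemt y, Finset.mem_univ, true_and]
        constructor
        · rintro ⟨-, h⟩; exact h
        · intro h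
          refine ⟨?_, h⟩
          rintro rfl
          rw [zero_pow (by norm_num)] at h
          exact hu0 h.symm
      rw [hfe]
    calc ∑ y ∈ t, χ₂ (1 - c * y ^ 10)
        = ∑ u ∈ t, ∑ y ∈ t.filter (fun y => y ^ 10 = u), χ₂ (1 - c * y ^ 10) :=
          (Finset.sum_fiberwise_of_maps_to hmaps _).symm
      _ = ∑ u ∈ t, (Nat.card {y : F // y ^ 10 = u} : ℂ) * χ₂ (1 - c * u) := by
          apply Finset.sum_congr rfl
          intro u hu
          have hcongr : ∀ y ∈ t.filter (fun y => y ^ 10 = u),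
              χ₂ (1 - c * y ^ 10) = χ₂ (1 - c * u) := by
            intro y hy
            rw [(Finset.mem_filter.mp hy).2]
          rw [Finset.sum_congr rfl hcongr, Finset.sum_const, nsmul_eq_mul, hfib u hu]
      _ = ∑ u ∈ t, (∑ j ∈ Finset.range 10, (ψ ^ j) u) * χ₂ (1 - c * u) := by
          apply Finset.sum_congr rfl
          intro u hu
          have hu0 : u ≠ 0 := (hmemt u).mp hu
          have h10 := hL 10 (by norm_num) ⟨m, hm⟩ u
          rw [show (q - 1) / 10 = m by omega] at h10
          rw [h10]
          congr 1
          apply Finset.sum_congr rfl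
          intro j _
          have hux : IsUnit u := isUnit_iff_ne_zero.mpr hu0
          rw [← hux.unit_spec, ← MulChar.pow_apply_coe, hψdef]
      _ = ∑ j ∈ Finset.range 10, ∑ u ∈ t, (ψ ^ j) u * χ₂ (1 - c * u) := by
          simp_rw [Finset.sum_mul]
          exact Finset.sum_comm
      _ = ∑ j ∈ Finset.range 10, ∑ u : F, (ψ ^ j) u * χ₂ (1 - c * u) := by
          apply Finset.sum_congr rfl
          intro j _
          apply Finset.sum_subset (Finset.subset_univ t)
          intro u _ hu
          have hu0 : u = 0 := by
            by_contra h
            exact hu ((hmemt u).mpr h)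
          subst hu0
          rw [MulChar.map_nonunit _ not_isUnit_zero, zero_mul]
      _ = ∑ j ∈ Finset.range 10, (ψ ^ j) c⁻¹ * jacobiSum (ψ ^ j) χ₂ :=
          Finset.sum_congr rfl (fun j _ => hsub j)
  have key : (N : ℂ) = ((q : ℂ) - 1)
      + ∑ j ∈ Finset.range 10, (ψ ^ j) c⁻¹ * jacobiSum (ψ ^ j) χ₂ := by
    rw [hNsum, Finset.sum_add_distrib, Finset.sum_const, hcardt, nsmul_eq_mul, mul_one, hT]
    have : ((q - 1 : ℕ) : ℂ) = (q : ℂ) - 1 := by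
      push_cast [Nat.cast_sub (by omega : 1 ≤ q)]
      ring
    rw [this]
  -- norm bounds
  have hnorm : ∀ j ∈ Finset.range 10, ‖(ψ ^ j) c⁻¹ * jacobiSum (ψ ^ j) χ₂‖
      ≤ if j = 0 ∨ j = 5 then 1 else Real.sqrt q := by
    intro j hj
    rw [Finset.mem_range] at hj
    rw [norm_mul, norm_mulChar_apply_unit _ (inv_ne_zero hc), one_mul]
    by_cases h0 : j = 0
    · subst h0
      rw [if_pos (Or.inl rfl), pow_zero, jacobiSum_one_nontrivial hχ₂ne, norm_neg, norm_one]
    by_cases h5 : j = 5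
    · subst h5
      rw [if_pos (Or.inr rfl), hψ5]
      have hJ : jacobiSum χ₂ χ₂ = -χ₂ (-1) := by
        nth_rewrite 2 [← hχ₂inv]
        exact jacobiSum_nontrivial_inv hχ₂ne
      rw [hJ, norm_neg,
        norm_mulChar_apply_unit _ (neg_ne_zero.mpr (one_ne_zero : (1 : F) ≠ 0))]
    · rw [if_neg (by tauto)]
      have hj1 : ψ ^ j ≠ 1 := by
        intro h
        have := (htriv j).mp h
        omega
      have hj2 : ψ ^ j * χ₂ ≠ 1 := by
        intro h
        rw [hψdef, hχ₂def, ← pow_mul, ← pow_add] at h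
        have hdv := (hpow _).mp h
        rw [hm] at hdv
        have h10 : 10 ∣ j + 5 := by
          have heq : m * j + 5 * m = (j + 5) * m := by ring
          rw [heq] at hdv
          exact (Nat.mul_dvd_mul_iff_right hm1).mp hdv
        omega
      rw [norm_jacobiSum hj1 hχ₂ne hj2, hq]
  have hsum_bound : ∑ j ∈ Finset.range 10, (if j = 0 ∨ j = 5 then (1 : ℝ) else Real.sqrt q)
      = 2 + 8 * Real.sqrt q := by
    norm_num [Finset.sum_range_succ]
    ring
  have hTbound : ‖∑ j ∈ Finset.range 10, (ψ ^ j) c⁻¹ * jacobiSum (ψ ^ j) χ₂‖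
      ≤ 2 + 8 * Real.sqrt q := by
    refine le_trans (norm_sum_le _ _) ?_
    rw [← hsum_bound]
    exact Finset.sum_le_sum hnorm
  -- conclude the main inequality
  have habs : |(N : ℝ) - ((q : ℝ) - 1)| ≤ 2 + 8 * Real.sqrt q := by
    have hdiff : (((N : ℝ) - ((q : ℝ) - 1) : ℝ) : ℂ)
        = ∑ j ∈ Finset.range 10, (ψ ^ j) c⁻¹ * jacobiSum (ψ ^ j) χ₂ := by
      push_cast
      rw [key]
      ring
    have := congrArg norm hdiff
    rw [Complex.norm_real, Real.norm_eq_abs] at this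
    rw [this]
    exact hTbound
  have hmain : (q : ℝ) - 8 * Real.sqrt q - 3 ≤ (N : ℝ) := by
    have h := (abs_le.mp habs).1
    linarith
  refine ⟨hmain, ?_⟩
  intro h72
  have hq72 : (72 : ℝ) ≤ (q : ℝ) := by exact_mod_cast h72
  have hs : Real.sqrt (q : ℝ) ^ 2 = (q : ℝ) := Real.sq_sqrt (by positivity)
  have hpos : 0 < (q : ℝ) - 8 * Real.sqrt q - 3 := by
    nlinarith [sq_nonneg (Real.sqrt (q : ℝ) - 9), Real.sqrt_nonneg (q : ℝ)]
  have hNpos : 0 < N := by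
    by_contra h
    push_neg at h
    interval_cases N
    · simp only [Nat.cast_zero] at hmain
      linarith
  have hne : Nonempty {xy : F × F // xy.1 ^ 2 + c * xy.2 ^ 10 = 1 ∧ xy.2 ≠ 0} :=
    (Nat.card_pos_iff.mp hNpos).1
  obtain ⟨⟨⟨a, y⟩, h1, h2⟩⟩ := hne
  exact ⟨a, y, h2, h1⟩
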